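/- There exist a linear functional S on D(ℝ) and a nonzero φ ∈ D(ℝ) such that: (a) the set { x ∈ ℝ : S(y ↦ φ(x − y)) ≠ 0 } is countable, so the pointwise convolution function x ↦ (S∗φ)(x) = S(y ↦ φ(x − y)) vanishes Lebesgue-almost everywhere; and yet (b) S(φ̌ ⋆ φ) = 1, where φ̌ ⋆ φ is the ordinary convolution of functions, (φ̌ ⋆ φ)(x) = ∫_ℝ φ(y − x)·φ(y) dy, which is a smooth compactly supported function and hence an element of D(ℝ). -/

import Mathlib

/-- `D(ℝ)`: the space of smooth compactly supported functions `ℝ → ℂ`,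
as a submodule of `ℝ → ℂ`. -/
noncomputable def TestD : Submodule ℂ (ℝ → ℂ) where
  carrier := {φ | ContDiff ℝ (⊤ : ℕ∞) φ ∧ HasCompactSupport φ}
  add_mem' hf hg := ⟨hf.1.add hg.1, hf.2.add hg.2⟩
  zero_mem' := ⟨contDiff_const, HasCompactSupport.zero⟩
  smul_mem' c f hf := ⟨hf.1.const_smul c,
    hf.2.mono (Function.support_const_smul_subset c f)⟩

open MeasureTheory

lemma transReflect_mem (φ : TestD) (x : ℝ) :
    (fun y : ℝ => (φ : ℝ → ℂ) (x - y)) ∈ TestD :=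
  ⟨φ.2.1.comp (contDiff_const.sub contDiff_id),
    φ.2.2.comp_homeomorph (Homeomorph.subLeft x)⟩

open Real Function Convolution

noncomputable def bumpR : ℝ → ℝ := fun u => expNegInvGlue u * expNegInvGlue (1 - u)
noncomputable def bumpC : ℝ → ℂ := fun u => (bumpR u : ℂ)

lemma bumpR_eq_zero {u : ℝ} (h : u ≤ 0 ∨ 1 ≤ u) : bumpR u = 0 := by
  rcases h with h | h
  · simp [bumpR, expNegInvGlue.zero_of_nonpos h]
  · simp [bumpR, expNegInvGlue.zero_of_nonpos (by linarith : 1 - u ≤ 0)]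

lemma bumpR_pos {u : ℝ} (h0 : 0 < u) (h1 : u < 1) : 0 < bumpR u :=
  mul_pos (expNegInvGlue.pos_of_pos h0) (expNegInvGlue.pos_of_pos (by linarith))

lemma bumpC_eq_zero {u : ℝ} (h : u ≤ 0 ∨ 1 ≤ u) : bumpC u = 0 := by
  simp [bumpC, bumpR_eq_zero h]

lemma bumpC_ne_zero {u : ℝ} (h0 : 0 < u) (h1 : u < 1) : bumpC u ≠ 0 := by
  simpa [bumpC, Complex.ofReal_eq_zero] using (bumpR_pos h0 h1).ne'

lemma bumpC_smooth : ContDiff ℝ (⊤ : ℕ∞) bumpC := by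
  have h1 : ContDiff ℝ (⊤ : ℕ∞) bumpR :=
    expNegInvGlue.contDiff.mul (expNegInvGlue.contDiff.comp (contDiff_const.sub contDiff_id))
  exact Complex.ofRealCLM.contDiff.comp h1

lemma bumpC_hcs : HasCompactSupport bumpC :=
  HasCompactSupport.intro (isCompact_Icc (a := (0:ℝ)) (b := 1)) fun u hu => by
    rw [Set.mem_Icc, not_and_or] at hu
    exact bumpC_eq_zero (by rcases hu with h | h <;> [left; right] <;> linarith [not_le.1 h])

noncomputable def φD : TestD := ⟨bumpC, bumpC_smooth, bumpC_hcs⟩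

noncomputable def gfun : ℝ → ℝ → ℂ := fun x y => bumpC (x - y)

lemma gfun_li : LinearIndependent ℂ gfun := by
  classical
  rw [linearIndependent_iff']
  intro s
  induction s using Finset.induction_on_max with
  | empty => intro c _ i hi; simp at hi
  | insert a s hlt ih =>
    intro c hsum i hi
    have ha : a ∉ s := fun h => lt_irrefl a (hlt a h)
    obtain ⟨ε, hε0, hε1, hεb⟩ : ∃ ε : ℝ, 0 < ε ∧ ε < 1 ∧ ∀ b ∈ s, b ≤ a - ε := by
      rcases s.eq_empty_or_nonempty with rfl | hne
      · exact ⟨1/2, by norm_num, by norm_num, by simp⟩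
      · refine ⟨min 1 (a - s.max' hne) / 2, ?_, ?_, ?_⟩
        · have := hlt _ (s.max'_mem hne)
          have : 0 < a - s.max' hne := by linarith
          positivity
        · have : min 1 (a - s.max' hne) ≤ 1 := min_le_left _ _
          linarith
        · intro b hb
          have h1 : b ≤ s.max' hne := s.le_max' b hb
          have hM : s.max' hne < a := hlt _ (s.max'_mem hne)
          have h3 := min_le_right 1 (a - s.max' hne)
          linarith
    have h0 := congrFun hsum (a - ε)
    rw [Finset.sum_apply] at h0
    simp only [Pi.smul_apply, smul_eq_mul, Pi.zero_apply] at h0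
    rw [Finset.sum_insert ha] at h0
    have hz : ∀ b ∈ s, c b * gfun b (a - ε) = 0 := by
      intro b hb
      have : gfun b (a - ε) = 0 := by
        apply bumpC_eq_zero
        left; have := hεb b hb; linarith
      rw [this, mul_zero]
    rw [Finset.sum_eq_zero hz, add_zero] at h0
    have hga : gfun a (a - ε) ≠ 0 := by
      have : a - (a - ε) = ε := by ring
      unfold gfun; rw [this]; exact bumpC_ne_zero hε0 hε1
    have hca : c a = 0 := by
      rcases mul_eq_zero.1 h0 with h | h
      · exact h
      · exact absurd h hga
    rcases Finset.mem_insert.1 hi with rfl | hi'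
    · exact hca
    · apply ih c _ i hi'
      have := hsum
      rw [Finset.sum_insert ha, hca, zero_smul, zero_add] at this
      exact this

noncomputable def gD : ℝ → TestD :=
  fun x => ⟨fun y : ℝ => (φD : ℝ → ℂ) (x - y), transReflect_mem φD x⟩

lemma gD_li : LinearIndependent ℂ gD :=
  LinearIndependent.of_comp TestD.subtype gfun_li

lemma gD_inj : Function.Injective gD := gD_li.injective

noncomputable def psiF : ℝ → ℂ := fun x => ∫ y : ℝ, bumpC (y - x) * bumpC y

lemma psiF_eq_conv :
    psiF = convolution (fun t => bumpC (-t)) bumpC (ContinuousLinearMap.mul ℝ ℂ) volume := by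
  funext x
  rw [convolution_def]
  simp only [ContinuousLinearMap.mul_apply']
  rw [← integral_sub_left_eq_self (fun t => bumpC (-t) * bumpC (x - t)) volume x]
  simp only [psiF]
  congr 1
  funext y
  simp only [neg_sub, sub_sub_cancel]

lemma refl_hcs : HasCompactSupport (fun t => bumpC (-t)) :=
  bumpC_hcs.comp_homeomorph (Homeomorph.neg ℝ)

lemma psiF_smooth : ContDiff ℝ (⊤ : ℕ∞) psiF := by
  rw [psiF_eq_conv]
  exact HasCompactSupport.contDiff_convolution_left _ refl_hcs
    (bumpC_smooth.comp contDiff_id.neg) (bumpC_smooth.continuous.locallyIntegrable)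

lemma psiF_hcs : HasCompactSupport psiF := by
  rw [psiF_eq_conv]
  exact HasCompactSupport.convolution _ refl_hcs bumpC_hcs

lemma psiF_zero_ne : psiF 0 ≠ 0 := by
  have h1 : psiF 0 = ((∫ y : ℝ, bumpR y ^ 2 : ℝ) : ℂ) := by
    have h2 : psiF 0 = ∫ y : ℝ, ((bumpR y ^ 2 : ℝ) : ℂ) := by
      simp only [psiF, sub_zero]
      congr 1; funext y; push_cast [bumpC]; ring
    rw [h2]; exact integral_ofReal
  rw [h1]
  rw [Complex.ofReal_ne_zero]
  have hint : Integrable (fun y : ℝ => bumpR y ^ 2) := by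
    have hc : Continuous fun y : ℝ => bumpR y ^ 2 := by
      have : Continuous bumpR :=
        (expNegInvGlue.contDiff (n := 1)).continuous.mul
          ((expNegInvGlue.contDiff (n := 1)).continuous.comp (continuous_const.sub continuous_id))
      fun_prop
    apply hc.integrable_of_hasCompactSupport
    apply HasCompactSupport.intro (isCompact_Icc (a := (0:ℝ)) (b := 1))
    intro u hu
    rw [Set.mem_Icc, not_and_or] at hu
    have : bumpR u = 0 :=
      bumpR_eq_zero (by rcases hu with h | h <;> [left; right] <;> linarith [not_le.1 h])
    simp [this]
  have hpos : 0 < ∫ y : ℝ, bumpR y ^ 2 := by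
    rw [integral_pos_iff_support_of_nonneg (fun y => sq_nonneg _) hint]
    have hsub : Set.Ioo (0:ℝ) 1 ⊆ support fun y => bumpR y ^ 2 := by
      intro u hu
      simp only [mem_support]
      exact (pow_pos (bumpR_pos hu.1 hu.2) 2).ne'
    have h4 : volume (Set.Ioo (0:ℝ) 1) ≤ volume (support fun y => bumpR y ^ 2) :=
      measure_mono hsub
    have hIoo : volume (Set.Ioo (0:ℝ) 1) = 1 := by simp
    rw [hIoo] at h4
    exact lt_of_lt_of_le one_pos h4
  exact_mod_cast hpos.ne'

noncomputable def ψD : TestD := ⟨psiF, psiF_smooth, psiF_hcs⟩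

/-- Inconsistency of the two definitions of convolution in the algebraic dual:
there are `S ∈ D*(ℝ)` and `0 ≠ φ ∈ D(ℝ)` such that the pointwise convolution
`x ↦ (S∗φ)(x) = S(y ↦ φ(x−y))` is nonzero only on a countable set (hence is
zero almost everywhere), while `S(φ̌ ⋆ φ) = 1`, where
`(φ̌ ⋆ φ)(x) = ∫ φ(y−x)·φ(y) dy ∈ D(ℝ)`. -/
theorem convolution_definitions_inconsistent :
    ∃ (S : TestD →ₗ[ℂ] ℂ) (φ : TestD), (φ : ℝ → ℂ) ≠ 0 ∧
      Set.Countable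
        {x : ℝ | S ⟨fun y : ℝ => (φ : ℝ → ℂ) (x - y), transReflect_mem φ x⟩ ≠ 0} ∧
      (∀ᵐ x : ℝ,
        S ⟨fun y : ℝ => (φ : ℝ → ℂ) (x - y), transReflect_mem φ x⟩ = 0) ∧
      ∃ ψ : TestD,
        (∀ x : ℝ, (ψ : ℝ → ℂ) x = ∫ y : ℝ, (φ : ℝ → ℂ) (y - x) * (φ : ℝ → ℂ) y) ∧
        S ψ = 1 := by
  classical
  have hsr : LinearIndepOn ℂ id (Set.range gD) := (linearIndepOn_id_range_iff gD_inj).2 gD_li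
  let B := Module.Basis.extend hsr
  have hψne : ψD ≠ 0 := by
    intro h
    apply psiF_zero_ne
    have : (ψD : ℝ → ℂ) 0 = 0 := by rw [h]; rfl
    exact this
  obtain ⟨i, hi⟩ : ∃ i, B.repr ψD i ≠ 0 := by
    by_contra h
    push_neg at h
    apply hψne
    have h1 : B.repr ψD = 0 := Finsupp.ext h
    exact B.repr.map_eq_zero_iff.1 h1
  set c : ℂ := B.repr ψD i with hc
  set S : TestD →ₗ[ℂ] ℂ := c⁻¹ • B.coord i with hS
  have hkey : ∀ x : ℝ, S (gD x) ≠ 0 → (i : TestD) = gD x := by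
    intro x hx
    have hmem : gD x ∈ hsr.extend (Set.subset_univ _) :=
      hsr.subset_extend _ ⟨x, rfl⟩
    set j : ↥(hsr.extend (Set.subset_univ _)) := ⟨gD x, hmem⟩ with hj
    have hBj : B j = gD x := Module.Basis.extend_apply_self hsr j
    have hco : B.coord i (gD x) ≠ 0 := by
      intro h
      apply hx
      rw [hS]
      simp [h]
    have : B.repr (gD x) i ≠ 0 := by rwa [Module.Basis.coord_apply] at hco
    rw [← hBj, B.repr_self] at this
    have hij : i = j := by
      by_contra hne
      exact this (Finsupp.single_eq_of_ne (fun h => hne h))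
    rw [hij, hj]
  have hcnt : Set.Countable {x : ℝ | S (gD x) ≠ 0} := by
    apply Set.Subsingleton.countable
    intro x hx y hy
    exact gD_inj ((hkey x hx).symm.trans (hkey y hy))
  refine ⟨S, φD, ?_, hcnt, ?_, ⟨ψD, fun x => rfl, ?_⟩⟩
  · intro h
    have := congrFun h (1/2 : ℝ)
    exact bumpC_ne_zero (by norm_num) (by norm_num) this
  · rw [ae_iff]
    exact Set.Countable.measure_zero hcnt volume
  · rw [hS]
    simp only [LinearMap.smul_apply, Module.Basis.coord_apply, smul_eq_mul]
    rw [← hc]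
    exact inv_mul_cancel₀ hi
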